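/- For any polynomial expression: the product of ∏_{i=1}^L (f_i − α)/(f_j − α) with (f_j − α)^k, summed appropriately, is a polynomial in α of degree at most L + k − 1; consequently, the answer A_n^{[θ]} = S_n^t Q_n^{[θ]} equals γ_n (∑_{i=1}^L W_{θ,i}/(f_i − α_n) + ∑_{i=0}^{X+M−1} I_i α_n^i) for some coefficients I_i independent of n. -/

import Mathlib

open Polynomial Finset

lemma eval_eq_sum_range_of_coeff' {F : Type*} [CommSemiring F] (n : ℕ) (p : Polynomial F)
    (h : ∀ m, n ≤ m → p.coeff m = 0) (x : F) :
    p.eval x = ∑ i ∈ Finset.range n, p.coeff i * x ^ i := by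
  rw [Polynomial.eval_eq_sum_range]
  rcases le_or_gt n (p.natDegree + 1) with hle | hlt
  · symm
    apply Finset.sum_subset (Finset.range_subset_range.2 hle)
    intro m _ hm2
    rw [h m (by simpa using hm2)]; ring
  · apply Finset.sum_subset (Finset.range_subset_range.2 hlt.le)
    intro m _ hm2
    rw [Polynomial.coeff_eq_zero_of_natDegree_lt (by simpa using hm2)]; ring

lemma core' {F : Type*} [Field F] (K X M : ℕ) (W : Fin K → F) (R : Fin X → Fin K → F)
    (Z : Fin M → Fin K → F) (θ : Fin K) (d : F) :
    ∑ k : Fin K, (W k + ∑ i : Fin X, d ^ ((i:ℕ)+1) * R i k) *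
      ((if k = θ then 1 else 0) + ∑ i : Fin M, d ^ ((i:ℕ)+1) * Z i k)
    = W θ + d * (∑ i : Fin X, R i θ * d ^ (i:ℕ)
        + ∑ i : Fin M, (∑ k : Fin K, W k * Z i k) * d ^ (i:ℕ)
        + ∑ i1 : Fin X, ∑ i2 : Fin M, (∑ k : Fin K, R i1 k * Z i2 k) * d ^ ((i1:ℕ)+(i2:ℕ)+1)) := by
  simp only [add_mul, mul_add, Finset.sum_add_distrib, mul_ite, mul_one, mul_zero,
    Finset.sum_ite_eq', Finset.mem_univ, if_true, Finset.mul_sum, Finset.sum_mul]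
  have h1 : ∑ i : Fin X, d ^ ((i:ℕ) + 1) * R i θ = ∑ i : Fin X, d * (R i θ * d ^ (i:ℕ)) := by
    apply Finset.sum_congr rfl; intros; ring
  have h2 : ∑ k : Fin K, ∑ m : Fin M, W k * (d ^ ((m:ℕ) + 1) * Z m k)
      = ∑ m : Fin M, ∑ k : Fin K, d * (W k * Z m k * d ^ (m:ℕ)) := by
    rw [Finset.sum_comm]
    apply Finset.sum_congr rfl; intros
    apply Finset.sum_congr rfl; intros; ring
  have h3 : ∑ k : Fin K, ∑ m : Fin M, ∑ x : Fin X, d ^ ((x:ℕ) + 1) * R x k * (d ^ ((m:ℕ) + 1) * Z m k)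
      = ∑ x : Fin X, ∑ m : Fin M, ∑ k : Fin K, d * (R x k * Z m k * d ^ ((x:ℕ) + (m:ℕ) + 1)) := by
    calc ∑ k : Fin K, ∑ m : Fin M, ∑ x : Fin X, d ^ ((x:ℕ) + 1) * R x k * (d ^ ((m:ℕ) + 1) * Z m k)
        = ∑ k : Fin K, ∑ x : Fin X, ∑ m : Fin M, d ^ ((x:ℕ) + 1) * R x k * (d ^ ((m:ℕ) + 1) * Z m k) := by
          apply Finset.sum_congr rfl; intros; rw [Finset.sum_comm]
      _ = ∑ x : Fin X, ∑ k : Fin K, ∑ m : Fin M, d ^ ((x:ℕ) + 1) * R x k * (d ^ ((m:ℕ) + 1) * Z m k) :=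
          Finset.sum_comm
      _ = ∑ x : Fin X, ∑ m : Fin M, ∑ k : Fin K, d * (R x k * Z m k * d ^ ((x:ℕ) + (m:ℕ) + 1)) := by
          apply Finset.sum_congr rfl; intros; rw [Finset.sum_comm]
          apply Finset.sum_congr rfl; intros
          apply Finset.sum_congr rfl; intros; ring
  rw [h1, h2, h3]; ring



/-- The answer A_n = S_n^t Q_n of the XSETSPIR scheme has the form
γ_n (∑_i W_{θ,i}/(f_i − α_n) + ∑_i I_i α_n^i) with coefficients I_i
independent of n. -/
theorem answer_decomposition {F : Type*} [Field F] [Fintype F]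
    (N L K X M : ℕ) (hK : 1 ≤ K) (hLN : X + M + L = N)
    (α : Fin N → F) (f : Fin L → F)
    (hdist : Function.Injective (Sum.elim α f : Fin N ⊕ Fin L → F))
    (W : Fin L → Fin K → F) (R : Fin L → Fin X → Fin K → F)
    (Z : Fin L → Fin M → Fin K → F) (θ : Fin K)
    (γ : Fin N → F) (hγ : ∀ n, γ n = ∏ i : Fin L, (f i - α n))
    (S : Fin N → Fin L → Fin K → F)
    (hS : ∀ n j k, S n j k = W j k + ∑ i : Fin X, (f j - α n) ^ ((i : ℕ) + 1) * R j i k)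
    (Q : Fin N → Fin L → Fin K → F)
    (hQ : ∀ n j k, Q n j k = γ n / (f j - α n) *
      ((if k = θ then 1 else 0) + ∑ i : Fin M, (f j - α n) ^ ((i : ℕ) + 1) * Z j i k))
    (A : Fin N → F) (hA : ∀ n, A n = ∑ j : Fin L, ∑ k : Fin K, S n j k * Q n j k) :
    ∃ I : Fin (X + M) → F, ∀ n, A n =
      γ n * (∑ i : Fin L, W i θ / (f i - α n) + ∑ i : Fin (X + M), I i * α n ^ (i : ℕ)) := by
  classical
  set P : Polynomial F := ∑ j : Fin L,
      (∑ i : Fin X, Polynomial.C (R j i θ) * (Polynomial.C (f j) - Polynomial.X) ^ (i:ℕ)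
      + ∑ i : Fin M, Polynomial.C (∑ k : Fin K, W j k * Z j i k) *
          (Polynomial.C (f j) - Polynomial.X) ^ (i:ℕ)
      + ∑ i1 : Fin X, ∑ i2 : Fin M, Polynomial.C (∑ k : Fin K, R j i1 k * Z j i2 k) *
          (Polynomial.C (f j) - Polynomial.X) ^ ((i1:ℕ)+(i2:ℕ)+1)) with hP
  have hdeg : ∀ (a c : F) (i : ℕ),
      (Polynomial.C c * (Polynomial.C a - Polynomial.X) ^ i).natDegree ≤ i := by
    intro a c i
    calc (Polynomial.C c * (Polynomial.C a - Polynomial.X) ^ i).natDegree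
        ≤ ((Polynomial.C a - Polynomial.X) ^ i).natDegree := Polynomial.natDegree_C_mul_le _ _
      _ ≤ i * (Polynomial.C a - Polynomial.X).natDegree := Polynomial.natDegree_pow_le
      _ ≤ i * 1 := by
          apply Nat.mul_le_mul_left
          exact le_trans (Polynomial.natDegree_sub_le _ _)
            (by simp [Polynomial.natDegree_C, Polynomial.natDegree_X])
      _ = i := Nat.mul_one i
  have hcoeff : ∀ m, X + M ≤ m → P.coeff m = 0 := by
    intro m hm
    rw [hP, Polynomial.finset_sum_coeff]
    apply Finset.sum_eq_zero
    intro j _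
    have hz : ∀ (c : F) (i : ℕ), i < X + M →
        (Polynomial.C c * (Polynomial.C (f j) - Polynomial.X) ^ i).coeff m = 0 := fun c i hi =>
      Polynomial.coeff_eq_zero_of_natDegree_lt (lt_of_le_of_lt (hdeg _ _ _) (lt_of_lt_of_le hi hm))
    simp only [Polynomial.coeff_add, Polynomial.finset_sum_coeff]
    rw [Finset.sum_eq_zero (fun (i : Fin X) _ => hz _ _ (by have := i.isLt; omega)),
      Finset.sum_eq_zero (fun (i : Fin M) _ => hz _ _ (by have := i.isLt; omega)),
      Finset.sum_eq_zero (fun (i1 : Fin X) _ => Finset.sum_eq_zero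
        (fun (i2 : Fin M) _ => hz _ _ (by have := i1.isLt; have := i2.isLt; omega)))]
    ring
  refine ⟨fun i => P.coeff i, fun n => ?_⟩
  have hsum : ∑ i : Fin (X + M), P.coeff (i : ℕ) * α n ^ (i : ℕ) = P.eval (α n) := by
    rw [Fin.sum_univ_eq_sum_range (fun i => P.coeff i * α n ^ i)]
    exact (eval_eq_sum_range_of_coeff' _ _ hcoeff _).symm
  rw [hsum]
  have hPeval : P.eval (α n) = ∑ j : Fin L,
      (∑ i : Fin X, R j i θ * (f j - α n) ^ (i:ℕ)
      + ∑ i : Fin M, (∑ k : Fin K, W j k * Z j i k) * (f j - α n) ^ (i:ℕ)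
      + ∑ i1 : Fin X, ∑ i2 : Fin M, (∑ k : Fin K, R j i1 k * Z j i2 k) *
          (f j - α n) ^ ((i1:ℕ)+(i2:ℕ)+1)) := by
    rw [hP]
    simp only [Polynomial.eval_finset_sum, Polynomial.eval_add, Polynomial.eval_mul,
      Polynomial.eval_pow, Polynomial.eval_sub, Polynomial.eval_C, Polynomial.eval_X]
  rw [hA n, hPeval, ← Finset.sum_add_distrib, Finset.mul_sum]
  apply Finset.sum_congr rfl
  intro j _
  have hd : f j - α n ≠ 0 := by
    rw [sub_ne_zero]
    intro h
    have : (Sum.inr j : Fin N ⊕ Fin L) = Sum.inl n := hdist (by simpa using h)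
    simp at this
  calc ∑ k : Fin K, S n j k * Q n j k
      = γ n / (f j - α n) * ∑ k : Fin K,
          (W j k + ∑ i : Fin X, (f j - α n) ^ ((i:ℕ)+1) * R j i k) *
          ((if k = θ then 1 else 0) + ∑ i : Fin M, (f j - α n) ^ ((i:ℕ)+1) * Z j i k) := by
        rw [Finset.mul_sum]
        apply Finset.sum_congr rfl
        intro k _
        rw [hS, hQ]; ring
    _ = γ n / (f j - α n) * (W j θ + (f j - α n) *
          (∑ i : Fin X, R j i θ * (f j - α n) ^ (i:ℕ)
          + ∑ i : Fin M, (∑ k : Fin K, W j k * Z j i k) * (f j - α n) ^ (i:ℕ)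
          + ∑ i1 : Fin X, ∑ i2 : Fin M, (∑ k : Fin K, R j i1 k * Z j i2 k) *
              (f j - α n) ^ ((i1:ℕ)+(i2:ℕ)+1))) := by
        rw [core' K X M (W j) (R j) (Z j) θ (f j - α n)]
    _ = _ := by field_simp
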